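/- Theorem 1 (Abelian symmetry bound): Suppose the unitary U, the density matrix ρ, and every Kraus operator of the partition X commute with a Hermitian operator Z with eigenspace decomposition H = ⊕_λ H_λ. Write ρ = ⊕_λ p_λ ρ_λ with p_λ = Tr(ρ|_{H_λ}), U_λ = U|_{H_λ}, X_λ the restricted partition. Then for all t, H_AFL(ρ, U, X, t) ≤ ∑_λ p_λ H_AFL(ρ_λ, U_λ, X_λ, t) + H({p_λ}), where H({p_λ}) is the Shannon entropy of the distribution {p_λ}. -/

import Mathlib

open scoped BigOperators ComplexOrder
open Matrix Kronecker

namespace AFL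

variable {n : Type*} [Fintype n] [DecidableEq n]

/-- von Neumann entropy of a (Hermitian) matrix, via its eigenvalues. -/
noncomputable def vNEntropy (ρ : Matrix n n ℂ) : ℝ :=
  if h : ρ.IsHermitian then -∑ i, h.eigenvalues i * Real.log (h.eigenvalues i) else 0

/-- A density matrix: positive semidefinite (hence Hermitian) with unit trace. -/
def IsDensity (ρ : Matrix n n ℂ) : Prop := ρ.PosSemidef ∧ ρ.trace = 1

/-- An operational partition of unity (Kraus operators of a channel). -/
def IsPartition {K : Type*} [Fintype K] (X : K → Matrix n n ℂ) : Prop :=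
  ∑ i, (X i)ᴴ * X i = 1

/-- The entropy-exchange (environment) state ρ̃[X]_{ij} = Tr(Xⁱ ρ Xʲ†). -/
noncomputable def envState {K : Type*} [Fintype K] (X : K → Matrix n n ℂ)
    (ρ : Matrix n n ℂ) : Matrix K K ℂ :=
  Matrix.of fun i j => (X i * ρ * (X j)ᴴ).trace

/-- Multitime Kraus operator U X^{i_t} ⋯ U X^{i_1} of the t-step evolved partition (UX)^t. -/
noncomputable def multiKraus {K : Type*} (U : Matrix n n ℂ) (X : K → Matrix n n ℂ)
    (t : ℕ) (idx : Fin t → K) : Matrix n n ℂ :=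
  (List.ofFn fun k => U * X (idx k)).prod

/-- Cumulative AFL entropy: von Neumann entropy of the environment state after t steps. -/
noncomputable def HAFL {K : Type*} [Fintype K] [DecidableEq K]
    (ρ U : Matrix n n ℂ) (X : K → Matrix n n ℂ) (t : ℕ) : ℝ :=
  vNEntropy (envState (multiKraus U X t) ρ)

/-- Shannon entropy of a probability vector. -/
noncomputable def shannon {ι : Type*} [Fintype ι] (p : ι → ℝ) : ℝ :=
  -∑ i, p i * Real.log (p i)

end AFL

namespace AFL

/-- Restriction of an operator to the charge sector (block) indexed by l. -/
def restrict {L : Type*} {m : L → Type*}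
    (A : Matrix ((l : L) × m l) ((l : L) × m l) ℂ) (l : L) : Matrix (m l) (m l) ℂ :=
  Matrix.of fun a b => A ⟨l, a⟩ ⟨l, b⟩

/-- The Hermitian symmetry operator Z = ⊕ z_l • 1 acting as a distinct scalar on each
eigenspace (charge sector). -/
noncomputable def symZ {L : Type*} [DecidableEq L] {m : L → Type*}
    [∀ l, Fintype (m l)] [∀ l, DecidableEq (m l)] (z : L → ℝ) :
    Matrix ((l : L) × m l) ((l : L) × m l) ℂ :=
  Matrix.blockDiagonal' fun l => (z l : ℂ) • (1 : Matrix (m l) (m l) ℂ)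

/-- p_l = Tr(ρ restricted to sector l). -/
noncomputable def sectorProb {L : Type*} {m : L → Type*} [∀ l, Fintype (m l)]
    (ρ : Matrix ((l : L) × m l) ((l : L) × m l) ℂ) (l : L) : ℝ :=
  ((restrict ρ l).trace).re

/-- ρ_l = p_l⁻¹ • (ρ restricted to sector l), the normalized state in sector l. -/
noncomputable def sectorState {L : Type*} {m : L → Type*} [∀ l, Fintype (m l)]
    (ρ : Matrix ((l : L) × m l) ((l : L) × m l) ℂ) (l : L) : Matrix (m l) (m l) ℂ :=
  ((sectorProb ρ l : ℂ))⁻¹ • restrict ρ l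

end AFL


namespace AFLaux
open AFL Polynomial
set_option linter.unusedSectionVars false

section basic
variable {n : Type*} [Fintype n] [DecidableEq n]

/-- entropy function applied to the real part of a complex number -/
noncomputable def gE : ℂ → ℝ := fun c => Real.negMulLog c.re

@[simp] lemma gE_zero : gE 0 = 0 := by simp [gE]

@[simp] lemma gE_ofReal (x : ℝ) : gE (x : ℂ) = Real.negMulLog x := by simp [gE]

lemma charpoly_of_hermitian {A : Matrix n n ℂ} (hA : A.IsHermitian) :
    A.charpoly = ∏ i, (X - C ((hA.eigenvalues i : ℂ))) := by
  set V : Matrix n n ℂ := (hA.eigenvectorUnitary : Matrix n n ℂ) with hV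
  have hVs : V * star V = 1 := (Matrix.mem_unitaryGroup_iff).mp hA.eigenvectorUnitary.2
  have hsV : star V * V = 1 := (Matrix.mem_unitaryGroup_iff').mp hA.eigenvectorUnitary.2
  set D : Matrix n n ℂ := Matrix.diagonal (RCLike.ofReal ∘ hA.eigenvalues) with hD
  set mc : Matrix n n ℂ →+* Matrix n n ℂ[X] := (C : ℂ →+* ℂ[X]).mapMatrix with hmc
  have key : charmatrix A = mc V * charmatrix D * mc (star V) := by
    have h1 : mc V * Matrix.scalar n (X : ℂ[X]) * mc (star V) = Matrix.scalar n (X : ℂ[X]) := by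
      rw [Matrix.scalar_apply, ← Matrix.smul_one_eq_diagonal, mul_smul_comm, smul_mul_assoc,
        mul_one, ← _root_.map_mul, hVs, _root_.map_one, Matrix.smul_one_eq_diagonal]
    calc charmatrix A = charmatrix (V * D * star V) := by congr 1; exact hA.spectral_theorem
      _ = Matrix.scalar n (X : ℂ[X]) - mc (V * D * star V) := rfl
      _ = mc V * Matrix.scalar n (X : ℂ[X]) * mc (star V) - mc V * mc D * mc (star V) := by
          rw [h1, ← _root_.map_mul mc, ← _root_.map_mul mc]
      _ = mc V * (Matrix.scalar n (X : ℂ[X]) - mc D) * mc (star V) := by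
          rw [mul_sub, sub_mul]
      _ = mc V * charmatrix D * mc (star V) := rfl
  have hdet : A.charpoly = (charmatrix D).det := by
    have hVdet : (mc V).det * (mc (star V)).det = 1 := by
      rw [← Matrix.det_mul, ← _root_.map_mul, hVs, _root_.map_one, Matrix.det_one]
    rw [Matrix.charpoly, key, Matrix.det_mul, Matrix.det_mul]
    calc (mc V).det * (charmatrix D).det * (mc (star V)).det
        = (charmatrix D).det * ((mc V).det * (mc (star V)).det) := by ring
      _ = (charmatrix D).det := by rw [hVdet, mul_one]
  rw [hdet]
  have : charmatrix D = Matrix.diagonal (fun i => (X : ℂ[X]) - C ((hA.eigenvalues i : ℂ))) := by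
    ext i j
    by_cases h : i = j
    · subst h; simp [hD, Matrix.diagonal_apply_eq]
    · simp [charmatrix_apply_ne _ _ _ h, hD, Matrix.diagonal_apply_ne _ h]
  rw [this, Matrix.det_diagonal]

lemma roots_charpoly_of_hermitian {A : Matrix n n ℂ} (hA : A.IsHermitian) :
    A.charpoly.roots = Finset.univ.val.map (fun i => ((hA.eigenvalues i : ℂ))) := by
  rw [charpoly_of_hermitian hA]
  rw [show (∏ i, (X - C ((hA.eigenvalues i : ℂ)))) =
      ((Finset.univ.val.map (fun i => ((hA.eigenvalues i : ℂ)))).map (fun a => X - C a)).prod by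
    rw [Multiset.map_map]; rfl]
  exact roots_multiset_prod_X_sub_C _

lemma sum_negMulLog_eigenvalues {A : Matrix n n ℂ} (hA : A.IsHermitian) :
    ∑ i, Real.negMulLog (hA.eigenvalues i) = (A.charpoly.roots.map gE).sum := by
  rw [roots_charpoly_of_hermitian hA, Multiset.map_map]
  rfl


variable {a b : Type*} [Fintype a] [DecidableEq a] [Fintype b] [DecidableEq b]

lemma eval_charpoly (A : Matrix n n ℂ) (x : ℂ) :
    A.charpoly.eval x = (x • (1 : Matrix n n ℂ) - A).det := by
  have : (Polynomial.evalRingHom x) A.charpoly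
      = ((charmatrix A).map (Polynomial.evalRingHom x)).det := by
    rw [Matrix.charpoly, ← RingHom.mapMatrix_apply, ← RingHom.map_det]
  rw [Matrix.charpoly] at this ⊢
  simp only [coe_evalRingHom] at this
  rw [this]
  congr 1
  ext i j
  by_cases h : i = j
  · subst h
    simp [charmatrix_apply_eq, Matrix.smul_apply, Matrix.one_apply_eq, Matrix.sub_apply]
  · simp [charmatrix_apply_ne _ _ _ h, Matrix.smul_apply, Matrix.one_apply_ne h,
      Matrix.sub_apply]

variable {a b : Type*} [Fintype a] [DecidableEq a] [Fintype b] [DecidableEq b]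

lemma charpoly_mul_comm_aux (M : Matrix a b ℂ) (N : Matrix b a ℂ) :
    (X : ℂ[X]) ^ (Fintype.card a) * (N * M).charpoly
      = X ^ (Fintype.card b) * (M * N).charpoly := by
  have key : ∀ x : ℂ, x ≠ 0 →
      x ^ (Fintype.card a) * ((N * M).charpoly.eval x)
        = x ^ (Fintype.card b) * ((M * N).charpoly.eval x) := by
    intro x hx
    set N' : Matrix b a ℂ := (-x⁻¹) • N with hN'
    have e1 : x • (1 : Matrix b b ℂ) - N * M = x • (1 + N' * M) := by
      rw [smul_add, hN', Matrix.smul_mul, smul_smul]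
      field_simp
      rw [sub_eq_add_neg, neg_one_smul]
    have e2 : x • (1 : Matrix a a ℂ) - M * N = x • (1 + M * N') := by
      rw [smul_add, hN', Matrix.mul_smul, smul_smul]
      field_simp
      rw [sub_eq_add_neg, neg_one_smul]
    rw [eval_charpoly, eval_charpoly, e1, e2, Matrix.det_smul, Matrix.det_smul,
      Matrix.det_one_add_mul_comm N' M]
    ring
  have : (X : ℂ[X]) ^ (Fintype.card a) * (N * M).charpoly
      - X ^ (Fintype.card b) * (M * N).charpoly = 0 := by
    apply Polynomial.eq_zero_of_infinite_isRoot
    apply Set.Infinite.mono (s := {x : ℂ | x ≠ 0})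
    · intro x hx
      simp only [Set.mem_setOf_eq, IsRoot, eval_sub, eval_mul, eval_pow, eval_X]
      rw [key x hx, sub_self]
    · exact Set.Finite.infinite_compl (Set.finite_singleton (0 : ℂ))
  linear_combination this


lemma sum_gE_roots_mul_comm (M : Matrix a b ℂ) (N : Matrix b a ℂ) :
    ((N * M).charpoly.roots.map gE).sum = ((M * N).charpoly.roots.map gE).sum := by
  have h2 := congrArg Polynomial.roots (charpoly_mul_comm_aux M N)
  rw [Polynomial.roots_mul (mul_ne_zero (pow_ne_zero _ Polynomial.X_ne_zero)
        (Matrix.charpoly_monic _).ne_zero),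
      Polynomial.roots_mul (mul_ne_zero (pow_ne_zero _ Polynomial.X_ne_zero)
        (Matrix.charpoly_monic _).ne_zero),
      Polynomial.roots_pow, Polynomial.roots_pow, Polynomial.roots_X] at h2
  have h3 := congrArg (fun s : Multiset ℂ => (s.map gE).sum) h2
  simpa [Multiset.map_nsmul, Multiset.sum_nsmul] using h3

variable {n : Type*} [Fintype n] [DecidableEq n]

lemma hermitian_apply_eq_sum {A : Matrix n n ℂ} (hA : A.IsHermitian) (i j : n) :
    A i j = ∑ k, (hA.eigenvalues k : ℂ) *
      ((hA.eigenvectorUnitary : Matrix n n ℂ) i k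
        * (starRingEnd ℂ) ((hA.eigenvectorUnitary : Matrix n n ℂ) j k)) := by
  set V : Matrix n n ℂ := (hA.eigenvectorUnitary : Matrix n n ℂ)
  conv_lhs => rw [hA.spectral_theorem, Unitary.conjStarAlgAut_apply]
  rw [Matrix.mul_apply]
  refine Finset.sum_congr rfl fun k _ => ?_
  rw [Matrix.mul_diagonal, Matrix.star_apply, Function.comp_apply]
  rw [show star (V j k) = (starRingEnd ℂ) (V j k) from rfl]
  rw [show (RCLike.ofReal (hA.eigenvalues k) : ℂ) = ((hA.eigenvalues k : ℂ)) from rfl]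
  ring

lemma unitary_col_normSq {V : Matrix n n ℂ} (h : star V * V = 1) (i : n) :
    ∑ j, Complex.normSq (V j i) = 1 := by
  have := congrFun (congrFun h i) i
  rw [Matrix.mul_apply] at this
  simp only [Matrix.star_apply, RCLike.star_def, Matrix.one_apply_eq] at this
  have : ((∑ j, Complex.normSq (V j i) : ℝ) : ℂ) = 1 := by
    push_cast
    rw [← this]
    refine Finset.sum_congr rfl fun j _ => ?_
    rw [mul_comm, Complex.mul_conj]
  exact_mod_cast this

lemma unitary_row_normSq {V : Matrix n n ℂ} (h : V * star V = 1) (i : n) :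
    ∑ j, Complex.normSq (V i j) = 1 := by
  have := congrFun (congrFun h i) i
  rw [Matrix.mul_apply] at this
  simp only [Matrix.star_apply, RCLike.star_def, Matrix.one_apply_eq] at this
  have : ((∑ j, Complex.normSq (V i j) : ℝ) : ℂ) = 1 := by
    push_cast
    rw [← this]
    refine Finset.sum_congr rfl fun j _ => ?_
    rw [Complex.mul_conj]
  exact_mod_cast this

/-- Schur–Horn style bound: for a PSD matrix, the entropy of the eigenvalues is at most
the entropy of the diagonal. -/
lemma sum_negMulLog_eigenvalues_le_diag {A : Matrix n n ℂ} (hA : A.PosSemidef) :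
    ∑ i, Real.negMulLog (hA.1.eigenvalues i) ≤ ∑ i, Real.negMulLog ((A i i).re) := by
  set V : Matrix n n ℂ := (hA.1.eigenvectorUnitary : Matrix n n ℂ) with hV
  set w : n → n → ℝ := fun i k => Complex.normSq (V i k) with hw
  have hVs : V * star V = 1 := (Matrix.mem_unitaryGroup_iff).mp hA.1.eigenvectorUnitary.2
  have hsV : star V * V = 1 := (Matrix.mem_unitaryGroup_iff').mp hA.1.eigenvectorUnitary.2
  have hrow : ∀ i, ∑ k, w i k = 1 := fun i => unitary_row_normSq hVs i
  have hcol : ∀ k, ∑ i, w i k = 1 := fun k => unitary_col_normSq hsV k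
  have hdiag : ∀ i, (A i i).re = ∑ k, w i k * hA.1.eigenvalues k := by
    intro i
    rw [hermitian_apply_eq_sum hA.1 i i, Complex.re_sum]
    refine Finset.sum_congr rfl fun k _ => ?_
    have : (hA.1.eigenvalues k : ℂ)
        * (V i k * (starRingEnd ℂ) (V i k)) = ((w i k * hA.1.eigenvalues k : ℝ) : ℂ) := by
      rw [Complex.mul_conj]
      push_cast
      ring
    rw [← hV, this, Complex.ofReal_re]
  have jensen : ∀ i, ∑ k, w i k * Real.negMulLog (hA.1.eigenvalues k)
      ≤ Real.negMulLog ((A i i).re) := by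
    intro i
    rw [hdiag i]
    have := Real.concaveOn_negMulLog.le_map_sum (t := Finset.univ) (w := w i)
      (p := hA.1.eigenvalues) (fun k _ => Complex.normSq_nonneg _) (hrow i)
      (fun k _ => hA.eigenvalues_nonneg k)
    simpa using this
  calc ∑ k, Real.negMulLog (hA.1.eigenvalues k)
      = ∑ k, (∑ i, w i k) * Real.negMulLog (hA.1.eigenvalues k) := by
        refine Finset.sum_congr rfl fun k _ => ?_
        rw [hcol k, one_mul]
    _ = ∑ i, ∑ k, w i k * Real.negMulLog (hA.1.eigenvalues k) := by
        rw [Finset.sum_comm]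
        exact Finset.sum_congr rfl fun k _ => Finset.sum_mul ..
    _ ≤ ∑ i, Real.negMulLog ((A i i).re) := Finset.sum_le_sum fun i _ => jensen i


lemma trace_eq_sum_eigenvalues {A : Matrix n n ℂ} (hA : A.IsHermitian) :
    A.trace = ∑ i, ((hA.eigenvalues i : ℝ) : ℂ) := by
  have hsV : star (hA.eigenvectorUnitary : Matrix n n ℂ) * (hA.eigenvectorUnitary : Matrix n n ℂ)
      = 1 := Matrix.mem_unitaryGroup_iff'.mp hA.eigenvectorUnitary.2
  conv_lhs => rw [hA.spectral_theorem, Unitary.conjStarAlgAut_apply]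
  rw [Matrix.trace_mul_cycle, hsV, Matrix.one_mul, Matrix.trace_diagonal]
  rfl


end basic

section entropy
variable {n : Type*} [Fintype n] [DecidableEq n]

lemma vNEntropy_eq {A : Matrix n n ℂ} (hA : A.IsHermitian) :
    vNEntropy A = ∑ i, Real.negMulLog (hA.eigenvalues i) := by
  rw [vNEntropy, dif_pos hA, ← Finset.sum_neg_distrib]
  exact Finset.sum_congr rfl fun i _ => (neg_mul _ _).symm

lemma shannon_eq {ι : Type*} [Fintype ι] (p : ι → ℝ) :
    shannon p = ∑ i, Real.negMulLog (p i) := by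
  rw [shannon, ← Finset.sum_neg_distrib]
  exact Finset.sum_congr rfl fun i _ => (neg_mul _ _).symm

end entropy

section psd
variable {n : Type*} [Fintype n] [DecidableEq n]

lemma psd_apply_nonneg {A : Matrix n n ℂ} (hA : A.PosSemidef) (i : n) : 0 ≤ A i i := by
  have := hA.dotProduct_mulVec_nonneg (Pi.single i 1)
  simpa [Matrix.mulVec_single, dotProduct, Pi.single_apply,
    apply_ite (star : ℂ → ℂ), ite_mul, Finset.sum_ite_eq] using this

lemma psd_trace_nonneg {A : Matrix n n ℂ} (hA : A.PosSemidef) : 0 ≤ A.trace :=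
  Finset.sum_nonneg fun i _ => psd_apply_nonneg hA i

lemma psd_trace_eq_re {A : Matrix n n ℂ} (hA : A.PosSemidef) :
    A.trace = ((A.trace.re : ℝ) : ℂ) := by
  have h := psd_trace_nonneg hA
  rw [Complex.le_def] at h
  exact Complex.ext rfl (by simpa using h.2.symm)

lemma psd_trace_re_nonneg {A : Matrix n n ℂ} (hA : A.PosSemidef) : 0 ≤ A.trace.re := by
  have h := psd_trace_nonneg hA
  rw [Complex.le_def] at h
  simpa using h.1

lemma psd_trace_zero {A : Matrix n n ℂ} (hA : A.PosSemidef) (h : A.trace = 0) : A = 0 := by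
  exact hA.trace_eq_zero_iff.mp h

lemma psd_smul_ofReal {A : Matrix n n ℂ} {c : ℝ} (hc : 0 ≤ c) (hA : A.PosSemidef) :
    ((c : ℂ) • A).PosSemidef := by
  refine Matrix.PosSemidef.of_dotProduct_mulVec_nonneg ?_ ?_
  · rw [Matrix.IsHermitian, Matrix.conjTranspose_smul, Complex.star_def, Complex.conj_ofReal,
      hA.1]
  · intro x
    rw [Matrix.smul_mulVec, dotProduct_smul]
    exact smul_nonneg (by exact_mod_cast hc) (hA.dotProduct_mulVec_nonneg x)

end psd

section env
variable {n : Type*} [Fintype n] [DecidableEq n] {K : Type*} [Fintype K]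

lemma envState_apply (X : K → Matrix n n ℂ) (ρ : Matrix n n ℂ) (i j : K) :
    envState X ρ i j = (X i * ρ * (X j)ᴴ).trace := rfl

lemma envState_smul (X : K → Matrix n n ℂ) (c : ℂ) (ρ : Matrix n n ℂ) :
    envState X (c • ρ) = c • envState X ρ := by
  ext i j
  simp [envState, Matrix.mul_smul, Matrix.smul_mul, Matrix.trace_smul]

lemma envState_posSemidef {ρ : Matrix n n ℂ} (hρ : ρ.PosSemidef)
    (X : K → Matrix n n ℂ) : (envState X ρ).PosSemidef := by
  refine Matrix.PosSemidef.of_dotProduct_mulVec_nonneg ?_ ?_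
  · ext i j
    rw [Matrix.conjTranspose_apply, envState_apply, envState_apply,
      show star ((X j * ρ * (X i)ᴴ).trace) = ((X j * ρ * (X i)ᴴ)ᴴ).trace from
        (Matrix.trace_conjTranspose _).symm]
    congr 1
    rw [Matrix.conjTranspose_mul, Matrix.conjTranspose_mul, Matrix.conjTranspose_conjTranspose,
      hρ.1, Matrix.mul_assoc]
  · intro x
    set B : Matrix n n ℂ := ∑ i, (starRingEnd ℂ) (x i) • X i with hB
    have key : star x ⬝ᵥ (envState X ρ) *ᵥ x = (B * ρ * Bᴴ).trace := by
      have hBH : Bᴴ = ∑ j, x j • (X j)ᴴ := by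
        rw [hB, Matrix.conjTranspose_sum]
        refine Finset.sum_congr rfl fun j _ => ?_
        rw [Matrix.conjTranspose_smul]
        simp
      calc star x ⬝ᵥ (envState X ρ) *ᵥ x
          = ∑ i, ∑ j, (starRingEnd ℂ) (x i) * x j * (X i * ρ * (X j)ᴴ).trace := by
            rw [dotProduct]
            simp only [Matrix.mulVec, dotProduct, Pi.star_apply, Finset.mul_sum]
            refine Finset.sum_congr rfl fun i _ => Finset.sum_congr rfl fun j _ => ?_
            rw [envState_apply, Complex.star_def]
            ring
        _ = (B * ρ * Bᴴ).trace := by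
            rw [hB, hBH]
            simp only [Matrix.sum_mul, Matrix.mul_sum, Matrix.smul_mul, Matrix.mul_smul,
              Matrix.trace_sum, Matrix.trace_smul, smul_smul, smul_eq_mul, Finset.mul_sum]
            rw [Finset.sum_comm]
            refine Finset.sum_congr rfl fun i _ => Finset.sum_congr rfl fun j _ => ?_
            ring
    rw [key]
    exact psd_trace_nonneg (hρ.mul_mul_conjTranspose_same B)

lemma envState_trace {X : K → Matrix n n ℂ} (h : ∑ i, (X i)ᴴ * X i = 1)
    (ρ : Matrix n n ℂ) : (envState X ρ).trace = ρ.trace := by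
  have : (envState X ρ).trace = ∑ i, ((X i)ᴴ * (X i * ρ)).trace := by
    rw [Matrix.trace]
    refine Finset.sum_congr rfl fun i _ => ?_
    rw [Matrix.diag_apply, envState_apply, Matrix.trace_mul_cycle, Matrix.mul_assoc]
  rw [this]
  have : ∑ i, ((X i)ᴴ * (X i * ρ)).trace = ((∑ i, (X i)ᴴ * X i) * ρ).trace := by
    rw [Matrix.sum_mul, Matrix.trace_sum]
    exact Finset.sum_congr rfl fun i _ => by rw [Matrix.mul_assoc]
  rw [this, h, Matrix.one_mul]

end env

section blocks
variable {L : Type*} [Fintype L] [DecidableEq L] {m : L → Type*}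
  [∀ l, Fintype (m l)] [∀ l, DecidableEq (m l)]

lemma symZ_eq_diagonal (z : L → ℝ) :
    symZ (m := m) z = Matrix.diagonal (fun s : (l : L) × m l => (z s.1 : ℂ)) := by
  rw [symZ, show (fun l => (z l : ℂ) • (1 : Matrix (m l) (m l) ℂ))
      = fun l => Matrix.diagonal (fun _ => (z l : ℂ)) from
    funext fun l => Matrix.smul_one_eq_diagonal _, Matrix.blockDiagonal'_diagonal]

lemma restrict_blockDiagonal' (f : ∀ l, Matrix (m l) (m l) ℂ) (l : L) :
    restrict (Matrix.blockDiagonal' f) l = f l := by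
  ext i j
  exact Matrix.blockDiagonal'_apply_eq f l i j

lemma restrict_one (l : L) :
    restrict (1 : Matrix ((l : L) × m l) ((l : L) × m l) ℂ) l = 1 := by
  ext i j
  rcases eq_or_ne i j with rfl | hij
  · simp [restrict, Matrix.one_apply]
  · rw [show restrict (1 : Matrix ((l : L) × m l) ((l : L) × m l) ℂ) l i j
        = (1 : Matrix ((l : L) × m l) ((l : L) × m l) ℂ) ⟨l, i⟩ ⟨l, j⟩ from rfl,
      Matrix.one_apply_ne (fun h => hij (eq_of_heq (Sigma.mk.inj_iff.mp h).2)), Matrix.one_apply_ne hij]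

lemma restrict_conjTranspose (A : Matrix ((l : L) × m l) ((l : L) × m l) ℂ) (l : L) :
    restrict Aᴴ l = (restrict A l)ᴴ := rfl

lemma restrict_mul {A B : Matrix ((l : L) × m l) ((l : L) × m l) ℂ}
    {fA fB : ∀ l, Matrix (m l) (m l) ℂ} (hA : A = Matrix.blockDiagonal' fA)
    (hB : B = Matrix.blockDiagonal' fB) (l : L) :
    restrict (A * B) l = restrict A l * restrict B l := by
  subst hA hB
  rw [← Matrix.blockDiagonal'_mul, restrict_blockDiagonal', restrict_blockDiagonal',
    restrict_blockDiagonal']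

lemma blockDiag_of_commute {z : L → ℝ} (hz : Function.Injective z)
    {A : Matrix ((l : L) × m l) ((l : L) × m l) ℂ}
    (h : A * symZ (m := m) z = symZ (m := m) z * A) :
    A = Matrix.blockDiagonal' (fun l => restrict A l) := by
  ext ⟨l, i⟩ ⟨l', j⟩
  rcases eq_or_ne l l' with rfl | hll
  · rw [Matrix.blockDiagonal'_apply_eq]; rfl
  · rw [Matrix.blockDiagonal'_apply_ne _ _ _ hll]
    have h1 := congrFun (congrFun h ⟨l, i⟩) ⟨l', j⟩
    rw [symZ_eq_diagonal] at h1
    rw [Matrix.mul_diagonal, Matrix.diagonal_mul] at h1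
    by_contra hA
    apply hll
    apply hz
    have h2 : ((z l' : ℂ) - (z l : ℂ)) * A ⟨l, i⟩ ⟨l', j⟩ = 0 := by linear_combination h1
    rcases mul_eq_zero.mp h2 with h3 | h3
    · exact_mod_cast (sub_eq_zero.mp h3).symm
    · exact absurd h3 hA

end blocks

section kraus
variable {n : Type*} [Fintype n] [DecidableEq n] {K : Type*} [Fintype K]

omit [Fintype K] in
lemma multiKraus_zero (U : Matrix n n ℂ) (X : K → Matrix n n ℂ) (idx : Fin 0 → K) :
    multiKraus U X 0 idx = 1 := by
  simp [multiKraus]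

omit [Fintype K] in
lemma multiKraus_succ (U : Matrix n n ℂ) (X : K → Matrix n n ℂ) (t : ℕ)
    (idx : Fin (t + 1) → K) :
    multiKraus U X (t + 1) idx = (U * X (idx 0)) * multiKraus U X t (fun k => idx k.succ) := by
  rw [multiKraus, List.ofFn_succ, List.prod_cons]
  rfl

lemma multiKraus_sum {U : Matrix n n ℂ} {X : K → Matrix n n ℂ}
    (hU : U ∈ Matrix.unitaryGroup n ℂ) (hX : IsPartition X) (t : ℕ) :
    ∑ idx : Fin t → K, (multiKraus U X t idx)ᴴ * multiKraus U X t idx = 1 := by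
  have hU' : Uᴴ * U = 1 := Matrix.mem_unitaryGroup_iff'.mp hU
  induction t with
  | zero =>
    rw [Fintype.sum_unique]
    simp [multiKraus_zero]
  | succ t ih =>
    rw [← Equiv.sum_comp (Fin.consEquiv fun _ : Fin (t + 1) => K)
      (fun idx => (multiKraus U X (t+1) idx)ᴴ * multiKraus U X (t+1) idx)]
    rw [Fintype.sum_prod_type_right]
    have hterm : ∀ (k : K) (rest : Fin t → K),
        (multiKraus U X (t+1) ((Fin.consEquiv fun _ : Fin (t+1) => K) (k, rest)))ᴴ
          * multiKraus U X (t+1) ((Fin.consEquiv fun _ : Fin (t+1) => K) (k, rest))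
        = (multiKraus U X t rest)ᴴ * ((X k)ᴴ * X k) * multiKraus U X t rest := by
      intro k rest
      have e1 : multiKraus U X (t+1) ((Fin.consEquiv fun _ : Fin (t+1) => K) (k, rest))
          = (U * X k) * multiKraus U X t rest := by
        rw [multiKraus_succ]
        congr 1
      rw [e1, Matrix.conjTranspose_mul, Matrix.conjTranspose_mul]
      have hcan : Uᴴ * (U * (X k * multiKraus U X t rest)) = X k * multiKraus U X t rest := by
        rw [← Matrix.mul_assoc, hU', Matrix.one_mul]
      simp only [Matrix.mul_assoc]
      rw [hcan]
    calc ∑ rest : Fin t → K, ∑ k : K,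
          (multiKraus U X (t+1) ((Fin.consEquiv fun _ : Fin (t+1) => K) (k, rest)))ᴴ
            * multiKraus U X (t+1) ((Fin.consEquiv fun _ : Fin (t+1) => K) (k, rest))
        = ∑ rest : Fin t → K, (multiKraus U X t rest)ᴴ * multiKraus U X t rest := by
          refine Finset.sum_congr rfl fun rest _ => ?_
          rw [Finset.sum_congr rfl fun k _ => hterm k rest]
          rw [← Finset.sum_mul, ← Finset.mul_sum, hX, Matrix.mul_one]
      _ = 1 := ih

end kraus

section envblocks
variable {L : Type*} [Fintype L] [DecidableEq L] {m : L → Type*}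
  [∀ l, Fintype (m l)] [∀ l, DecidableEq (m l)] {K : Type*} [Fintype K]

lemma envState_blockDiagonal' (Mf : K → ∀ l, Matrix (m l) (m l) ℂ)
    (r : ∀ l, Matrix (m l) (m l) ℂ) :
    envState (fun i => Matrix.blockDiagonal' (Mf i)) (Matrix.blockDiagonal' r)
      = ∑ l, envState (fun i => Mf i l) (r l) := by
  ext i j
  rw [Matrix.sum_apply]
  rw [envState_apply, Matrix.blockDiagonal'_conjTranspose, ← Matrix.blockDiagonal'_mul,
    ← Matrix.blockDiagonal'_mul, Matrix.trace_blockDiagonal']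
  rfl

end envblocks


section blocks2
variable {L : Type*} [Fintype L] [DecidableEq L] {m : L → Type*}
  [∀ l, Fintype (m l)] [∀ l, DecidableEq (m l)]

lemma star_blockDiag {A : Matrix ((l : L) × m l) ((l : L) × m l) ℂ}
    {fA : ∀ l, Matrix (m l) (m l) ℂ} (hA : A = Matrix.blockDiagonal' fA) :
    star A = Matrix.blockDiagonal' (fun l => star (fA l)) := by
  rw [hA, Matrix.star_eq_conjTranspose, Matrix.blockDiagonal'_conjTranspose]
  rfl

lemma restrict_star (A : Matrix ((l : L) × m l) ((l : L) × m l) ℂ) (l : L) :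
    restrict (star A) l = star (restrict A l) := rfl

lemma restrict_sum {ι : Type*} (s : Finset ι)
    (f : ι → Matrix ((l : L) × m l) ((l : L) × m l) ℂ) (l : L) :
    restrict (∑ i ∈ s, f i) l = ∑ i ∈ s, restrict (f i) l := by
  ext a b
  rw [show restrict (∑ i ∈ s, f i) l a b = (∑ i ∈ s, f i) ⟨l, a⟩ ⟨l, b⟩ from rfl,
    Matrix.sum_apply, Matrix.sum_apply]
  rfl

lemma restrict_unitary {U : Matrix ((l : L) × m l) ((l : L) × m l) ℂ}
    (hUb : U = Matrix.blockDiagonal' (fun l => restrict U l))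
    (hU : U ∈ Matrix.unitaryGroup ((l : L) × m l) ℂ) (l : L) :
    restrict U l ∈ Matrix.unitaryGroup (m l) ℂ := by
  rw [Matrix.mem_unitaryGroup_iff']
  have h1 : star U * U = 1 := Matrix.mem_unitaryGroup_iff'.mp hU
  have h2 := congrArg (fun A => restrict A l) h1
  rw [restrict_mul (star_blockDiag hUb) hUb l, restrict_star, restrict_one] at h2
  exact h2

lemma restrict_partition {K : Type*} [Fintype K]
    {X : K → Matrix ((l : L) × m l) ((l : L) × m l) ℂ}
    (hXb : ∀ i, X i = Matrix.blockDiagonal' (fun l => restrict (X i) l))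
    (hX : IsPartition X) (l : L) : IsPartition (fun i => restrict (X i) l) := by
  rw [IsPartition] at hX ⊢
  have h2 := congrArg (fun A => restrict A l) hX
  rw [restrict_sum, restrict_one] at h2
  rw [← h2]
  refine Finset.sum_congr rfl fun i _ => ?_
  rw [restrict_mul (B := X i) (fA := fun l => (restrict (X i) l)ᴴ) ?_ (hXb i) l,
    restrict_conjTranspose]
  have := star_blockDiag (hXb i)
  rw [Matrix.star_eq_conjTranspose] at this
  rw [this]
  rfl

lemma multiKraus_blockDiagonal' {K : Type*}
    {U : Matrix ((l : L) × m l) ((l : L) × m l) ℂ}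
    {X : K → Matrix ((l : L) × m l) ((l : L) × m l) ℂ}
    (hUb : U = Matrix.blockDiagonal' (fun l => restrict U l))
    (hXb : ∀ i, X i = Matrix.blockDiagonal' (fun l => restrict (X i) l))
    (t : ℕ) (idx : Fin t → K) :
    multiKraus U X t idx = Matrix.blockDiagonal'
      (fun l => multiKraus (restrict U l) (fun i => restrict (X i) l) t idx) := by
  induction t with
  | zero =>
    rw [multiKraus_zero]
    rw [show (fun l => multiKraus (restrict U l) (fun i => restrict (X i) l) 0 idx)
        = fun l => 1 from funext fun l => multiKraus_zero _ _ _]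
    exact Matrix.blockDiagonal'_one.symm
  | succ s ih =>
    rw [multiKraus_succ, ih (fun k => idx k.succ),
      show (fun l => multiKraus (restrict U l) (fun i => restrict (X i) l) (s+1) idx)
        = fun l => (restrict U l * restrict (X (idx 0)) l)
            * multiKraus (restrict U l) (fun i => restrict (X i) l) s (fun k => idx k.succ)
        from funext fun l => multiKraus_succ _ _ _ _]
    conv_lhs => rw [hUb, hXb (idx 0)]
    rw [← Matrix.blockDiagonal'_mul, ← Matrix.blockDiagonal'_mul]
    simp only [restrict_blockDiagonal']

end blocks2

lemma mixture_entropy_bound {L I : Type*} [Fintype L] [DecidableEq L] [Fintype I]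
    [DecidableEq I] (p : L → ℝ) (σ : L → Matrix I I ℂ) (ρt : Matrix I I ℂ)
    (hp : ∀ l, 0 ≤ p l) (hσ : ∀ l, (σ l).PosSemidef)
    (htr : ∀ l, p l ≠ 0 → (σ l).trace = 1)
    (hmix : ρt = ∑ l, ((p l : ℝ) : ℂ) • σ l) :
    vNEntropy ρt ≤ (∑ l, p l * vNEntropy (σ l)) + ∑ l, Real.negMulLog (p l) := by
  classical
  set q : L → I → ℝ := fun l => (hσ l).1.eigenvalues with hqdef
  have hqnn : ∀ l i, 0 ≤ q l i := fun l i => (hσ l).eigenvalues_nonneg i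
  have hqsum : ∀ l, p l ≠ 0 → ∑ i, q l i = 1 := by
    intro l h
    have h1 : (σ l).trace = ((∑ i, q l i : ℝ) : ℂ) := by
      rw [trace_eq_sum_eigenvalues (hσ l).1]
      norm_cast
    rw [htr l h] at h1
    exact_mod_cast h1.symm
  set V : L → Matrix I I ℂ := fun l => ((hσ l).1.eigenvectorUnitary : Matrix I I ℂ) with hVdef
  have hsVl : ∀ l, star (V l) * V l = 1 :=
    fun l => Matrix.mem_unitaryGroup_iff'.mp (hσ l).1.eigenvectorUnitary.2
  have hpq : ∀ l i, 0 ≤ p l * q l i := fun l i => mul_nonneg (hp l) (hqnn l i)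
  set D : Matrix (L × I) I ℂ :=
    Matrix.of (fun a j => ((Real.sqrt (p a.1 * q a.1 a.2) : ℝ) : ℂ)
      * (starRingEnd ℂ) (V a.1 j a.2)) with hDdef
  have hDa : ∀ (a : L × I) (j : I), D a j
      = ((Real.sqrt (p a.1 * q a.1 a.2) : ℝ) : ℂ) * (starRingEnd ℂ) (V a.1 j a.2) :=
    fun a j => rfl
  have hs : ∀ l i, ((Real.sqrt (p l * q l i) : ℝ) : ℂ) * ((Real.sqrt (p l * q l i) : ℝ) : ℂ)
      = ((p l : ℝ) : ℂ) * ((q l i : ℝ) : ℂ) := by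
    intro l i
    rw [← Complex.ofReal_mul, Real.mul_self_sqrt (hpq l i), Complex.ofReal_mul]
  have hDD : Dᴴ * D = ρt := by
    rw [hmix]
    ext j j'
    rw [Matrix.mul_apply, Matrix.sum_apply, Fintype.sum_prod_type]
    refine Finset.sum_congr rfl fun l _ => ?_
    rw [Matrix.smul_apply, hermitian_apply_eq_sum (hσ l).1 j j', Finset.smul_sum]
    refine Finset.sum_congr rfl fun i _ => ?_
    rw [Matrix.conjTranspose_apply, hDa, hDa]
    simp only [_root_.map_mul, Complex.conj_conj, Complex.conj_ofReal, smul_eq_mul, Complex.star_def]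
    linear_combination (V l j i * (starRingEnd ℂ) (V l j' i)) * hs l i
  have hdiagDD : ∀ a : L × I, (D * Dᴴ) a a = ((p a.1 : ℝ) : ℂ) * ((q a.1 a.2 : ℝ) : ℂ) := by
    rintro ⟨l, i⟩
    rw [Matrix.mul_apply]
    have hterm : ∀ j, D (l, i) j * (Dᴴ) j (l, i)
        = (((p l : ℝ) : ℂ) * ((q l i : ℝ) : ℂ)) * ((Complex.normSq (V l j i) : ℝ) : ℂ) := by
      intro j
      rw [Matrix.conjTranspose_apply, hDa]
      simp only [_root_.map_mul, Complex.conj_conj, Complex.conj_ofReal, Complex.star_def]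
      have hn : (starRingEnd ℂ) (V l j i) * V l j i = ((Complex.normSq (V l j i) : ℝ) : ℂ) := by
        rw [mul_comm, Complex.mul_conj]
      linear_combination ((starRingEnd ℂ) (V l j i) * V l j i) * hs l i
        + (((p l : ℝ) : ℂ) * ((q l i : ℝ) : ℂ)) * hn
    rw [Finset.sum_congr rfl fun j _ => hterm j, ← Finset.mul_sum]
    have hone : ∑ j, ((Complex.normSq (V l j i) : ℝ) : ℂ) = 1 := by
      norm_cast
      exact unitary_col_normSq (hsVl l) i
    rw [hone, mul_one]
  have hPSD1 : (Dᴴ * D).PosSemidef := Matrix.posSemidef_conjTranspose_mul_self D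
  have hPSD2 : (D * Dᴴ).PosSemidef := Matrix.posSemidef_self_mul_conjTranspose D
  calc vNEntropy ρt = vNEntropy (Dᴴ * D) := by rw [hDD]
    _ = ∑ i, Real.negMulLog (hPSD1.1.eigenvalues i) := vNEntropy_eq hPSD1.1
    _ = (((Dᴴ * D).charpoly.roots).map gE).sum := sum_negMulLog_eigenvalues hPSD1.1
    _ = (((D * Dᴴ).charpoly.roots).map gE).sum := sum_gE_roots_mul_comm D Dᴴ
    _ = ∑ a, Real.negMulLog (hPSD2.1.eigenvalues a) := (sum_negMulLog_eigenvalues hPSD2.1).symm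
    _ ≤ ∑ a : L × I, Real.negMulLog (((D * Dᴴ) a a).re) := sum_negMulLog_eigenvalues_le_diag hPSD2
    _ = ∑ a : L × I, Real.negMulLog (p a.1 * q a.1 a.2) := by
        refine Finset.sum_congr rfl fun a _ => ?_
        rw [hdiagDD a, ← Complex.ofReal_mul, Complex.ofReal_re]
    _ = ∑ l, (p l * (∑ i, Real.negMulLog (q l i)) + Real.negMulLog (p l)) := by
        rw [Fintype.sum_prod_type]
        refine Finset.sum_congr rfl fun l _ => ?_
        by_cases hpl : p l = 0
        · simp [hpl]
        · rw [Finset.sum_congr rfl fun i _ => Real.negMulLog_mul (p l) (q l i)]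
          rw [Finset.sum_add_distrib, ← Finset.sum_mul, hqsum l hpl, one_mul, ← Finset.mul_sum]
          ring
    _ = (∑ l, p l * vNEntropy (σ l)) + ∑ l, Real.negMulLog (p l) := by
        rw [← Finset.sum_add_distrib]
        refine Finset.sum_congr rfl fun l _ => ?_
        rw [vNEntropy_eq (hσ l).1]


end AFLaux

/-- Theorem 1: if the unitary U, the state ρ and every Kraus operator of
the partition X commute with the Hermitian operator Z = ⊕ z_l • 1 (z injective, so the
sectors are exactly the eigenspaces of Z), then for all t,
H_AFL(ρ,U,X,t) ≤ ∑_l p_l H_AFL(ρ_l,U_l,X_l,t) + H({p_l}). -/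
theorem stmt10 {L : Type*} [Fintype L] [DecidableEq L]
    {m : L → Type*} [∀ l, Fintype (m l)] [∀ l, DecidableEq (m l)]
    {K : Type*} [Fintype K] [DecidableEq K]
    (z : L → ℝ) (hz : Function.Injective z)
    (U ρ : Matrix ((l : L) × m l) ((l : L) × m l) ℂ)
    (X : K → Matrix ((l : L) × m l) ((l : L) × m l) ℂ)
    (hU : U ∈ Matrix.unitaryGroup ((l : L) × m l) ℂ)
    (hρ : AFL.IsDensity ρ) (hX : AFL.IsPartition X)
    (hUZ : U * AFL.symZ (m := m) z = AFL.symZ (m := m) z * U)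
    (hρZ : ρ * AFL.symZ (m := m) z = AFL.symZ (m := m) z * ρ)
    (hXZ : ∀ i, X i * AFL.symZ (m := m) z = AFL.symZ (m := m) z * X i)
    (t : ℕ) :
    AFL.HAFL ρ U X t ≤
      (∑ l, AFL.sectorProb ρ l *
        AFL.HAFL (AFL.sectorState ρ l) (AFL.restrict U l) (fun i => AFL.restrict (X i) l) t)
      + AFL.shannon (AFL.sectorProb ρ) := by
  classical
  have hUb := AFLaux.blockDiag_of_commute hz hUZ
  have hρb := AFLaux.blockDiag_of_commute hz hρZ
  have hXb : ∀ i, X i = Matrix.blockDiagonal' (fun l => AFL.restrict (X i) l) :=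
    fun i => AFLaux.blockDiag_of_commute hz (hXZ i)
  have hrsPSD : ∀ l, (AFL.restrict ρ l).PosSemidef := fun l => hρ.1.submatrix (Sigma.mk l)
  have htr : ∀ l, (AFL.restrict ρ l).trace = ((AFL.sectorProb ρ l : ℝ) : ℂ) := fun l =>
    AFLaux.psd_trace_eq_re (hrsPSD l)
  have hpnn : ∀ l, 0 ≤ AFL.sectorProb ρ l := fun l => AFLaux.psd_trace_re_nonneg (hrsPSD l)
  have hrs0 : ∀ l, AFL.sectorProb ρ l = 0 → AFL.restrict ρ l = 0 := fun l h =>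
    AFLaux.psd_trace_zero (hrsPSD l) (by rw [htr l, h, Complex.ofReal_zero])
  have hsecPSD : ∀ l, (AFL.sectorState ρ l).PosSemidef := by
    intro l
    have e : AFL.sectorState ρ l
        = ((((AFL.sectorProb ρ l)⁻¹ : ℝ)) : ℂ) • AFL.restrict ρ l := by
      rw [Complex.ofReal_inv]
      rfl
    rw [e]
    exact AFLaux.psd_smul_ofReal (inv_nonneg.mpr (hpnn l)) (hrsPSD l)
  have hrestrict_eq : ∀ l,
      AFL.restrict ρ l = ((AFL.sectorProb ρ l : ℝ) : ℂ) • AFL.sectorState ρ l := by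
    intro l
    by_cases h : AFL.sectorProb ρ l = 0
    · rw [hrs0 l h, h]
      simp
    · rw [show AFL.sectorState ρ l = ((AFL.sectorProb ρ l : ℂ))⁻¹ • AFL.restrict ρ l from rfl,
        smul_smul, mul_inv_cancel₀ (Complex.ofReal_ne_zero.mpr h), one_smul]
  have hUl : ∀ l, AFL.restrict U l ∈ Matrix.unitaryGroup (m l) ℂ :=
    fun l => AFLaux.restrict_unitary hUb hU l
  have hXl : ∀ l, AFL.IsPartition (fun i => AFL.restrict (X i) l) :=
    fun l => AFLaux.restrict_partition hXb hX l
  have hKraus : ∀ l, ∑ idx : Fin t → K,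
      (AFL.multiKraus (AFL.restrict U l) (fun i => AFL.restrict (X i) l) t idx)ᴴ
        * AFL.multiKraus (AFL.restrict U l) (fun i => AFL.restrict (X i) l) t idx = 1 :=
    fun l => AFLaux.multiKraus_sum (hUl l) (hXl l) t
  have hσPSD : ∀ l, (AFL.envState
      (AFL.multiKraus (AFL.restrict U l) (fun i => AFL.restrict (X i) l) t)
      (AFL.sectorState ρ l)).PosSemidef :=
    fun l => AFLaux.envState_posSemidef (hsecPSD l) _
  have hσtr : ∀ l, AFL.sectorProb ρ l ≠ 0 → (AFL.envState
      (AFL.multiKraus (AFL.restrict U l) (fun i => AFL.restrict (X i) l) t)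
      (AFL.sectorState ρ l)).trace = 1 := by
    intro l h
    rw [AFLaux.envState_trace (hKraus l)]
    rw [show AFL.sectorState ρ l = ((AFL.sectorProb ρ l : ℂ))⁻¹ • AFL.restrict ρ l from rfl,
      Matrix.trace_smul, htr l, smul_eq_mul, inv_mul_cancel₀ (Complex.ofReal_ne_zero.mpr h)]
  have hmix : AFL.envState (AFL.multiKraus U X t) ρ
      = ∑ l, ((AFL.sectorProb ρ l : ℝ) : ℂ) • AFL.envState
          (AFL.multiKraus (AFL.restrict U l) (fun i => AFL.restrict (X i) l) t)
          (AFL.sectorState ρ l) := by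
    calc AFL.envState (AFL.multiKraus U X t) ρ
        = AFL.envState (fun idx => Matrix.blockDiagonal' fun l =>
            AFL.multiKraus (AFL.restrict U l) (fun i => AFL.restrict (X i) l) t idx)
            (Matrix.blockDiagonal' fun l => AFL.restrict ρ l) := by
          rw [← hρb]
          exact congrArg (fun Y => AFL.envState Y ρ)
            (funext fun idx => AFLaux.multiKraus_blockDiagonal' hUb hXb t idx)
      _ = ∑ l, AFL.envState
            (fun idx => AFL.multiKraus (AFL.restrict U l) (fun i => AFL.restrict (X i) l) t idx)
            (AFL.restrict ρ l) := AFLaux.envState_blockDiagonal' _ _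
      _ = _ := by
          refine Finset.sum_congr rfl fun l _ => ?_
          rw [hrestrict_eq l, AFLaux.envState_smul]
  have hfinal := AFLaux.mixture_entropy_bound (AFL.sectorProb ρ)
    (fun l => AFL.envState
      (AFL.multiKraus (AFL.restrict U l) (fun i => AFL.restrict (X i) l) t)
      (AFL.sectorState ρ l))
    (AFL.envState (AFL.multiKraus U X t) ρ) hpnn hσPSD hσtr hmix
  calc AFL.HAFL ρ U X t
      = AFL.vNEntropy (AFL.envState (AFL.multiKraus U X t) ρ) := rfl
    _ ≤ (∑ l, AFL.sectorProb ρ l * AFL.vNEntropy (AFL.envState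
          (AFL.multiKraus (AFL.restrict U l) (fun i => AFL.restrict (X i) l) t)
          (AFL.sectorState ρ l))) + ∑ l, Real.negMulLog (AFL.sectorProb ρ l) := hfinal
    _ = _ := by
        rw [← AFLaux.shannon_eq]
        rfl
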